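/- Let α, γ, δ > 0 and let G(x,y,p,q,κ) be the 5×5 symmetric matrix with entries g_xx = g_yy = α/y², g_pp = γ(x²+y²)/y + δq², g_qq = γ/y + δp², g_pq = g_qp = γx/y − δpq, g_pκ = g_κp = δq, g_qκ = g_κq = −δp, g_κκ = δ, all other entries zero. For (a,b,c,d) with ad − bc = 1, (λ,μ) ∈ ℝ² and κ₀ ∈ ℝ, define Φ : {(x,y,p,q,κ) : y > 0} → ℝ⁵ by Φ(x,y,p,q,κ) = (x₁,y₁,p₁,q₁,κ₁) with Λ = (cx+d)²+(cy)², x₁ = ((ax+b)(cx+d)+acy²)/Λ, y₁ = y/Λ, p₁ = (λd−μc)+dp−cq, q₁ = (−λb+μa)−bp+aq, κ₁ = κ₀ + κ + λq − μp. Then y₁ > 0 and (DΦ(P))ᵀ · G(Φ(P)) · DΦ(P) = G(P) for every P with y > 0. That is, the metric ds² = α(dx²+dy²)/y² + (γ/y)[(x²+y²)dp² + dq² + 2x dp dq] + δ(dκ − p dq + q dp)² on the extended Siegel–Jacobi upper half-plane X̃₁^J is invariant under the action of the real Jacobi group G^J₁(ℝ). -/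

import Mathlib

open Matrix

/-- The Jacobian matrix of a map `Φ : ℝⁿ → ℝⁿ` at a point `P`. -/
noncomputable def jacobianMat {n : ℕ} (Φ : (Fin n → ℝ) → (Fin n → ℝ)) (P : Fin n → ℝ) :
    Matrix (Fin n) (Fin n) ℝ :=
  fun i j => fderiv ℝ (fun Q => Φ Q i) P (Pi.single j 1)

/-- The matrix of the invariant metric
`ds² = α(dx²+dy²)/y² + (γ/y)[(x²+y²)dp² + dq² + 2x dp dq] + δ(dκ − p dq + q dp)²`
on the extended Siegel–Jacobi upper half-plane, coordinates `P = (x,y,p,q,κ)`. -/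
noncomputable def extG (α γ δ : ℝ) (P : Fin 5 → ℝ) : Matrix (Fin 5) (Fin 5) ℝ :=
  !![α / (P 1) ^ 2, 0, 0, 0, 0;
     0, α / (P 1) ^ 2, 0, 0, 0;
     0, 0, γ * ((P 0) ^ 2 + (P 1) ^ 2) / (P 1) + δ * (P 3) ^ 2,
       γ * (P 0) / (P 1) - δ * (P 2) * (P 3), δ * (P 3);
     0, 0, γ * (P 0) / (P 1) - δ * (P 2) * (P 3),
       γ / (P 1) + δ * (P 2) ^ 2, -(δ * (P 2));
     0, 0, δ * (P 3), -(δ * (P 2)), δ]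

/-- The action of the element `(a,b,c,d,λ,μ,κ₀)` of the real Jacobi group
`G^J₁(ℝ)` on the extended Siegel–Jacobi upper half-plane, coordinates
`(x,y,p,q,κ)`. -/
noncomputable def jPhiExt (a b c d l m k₀ : ℝ) (P : Fin 5 → ℝ) : Fin 5 → ℝ :=
  ![((a * P 0 + b) * (c * P 0 + d) + a * c * (P 1) ^ 2) /
      ((c * P 0 + d) ^ 2 + (c * P 1) ^ 2),
    P 1 / ((c * P 0 + d) ^ 2 + (c * P 1) ^ 2),
    (l * d - m * c) + d * P 2 - c * P 3,
    (-(l * b) + m * a) - b * P 2 + a * P 3,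
    k₀ + P 4 + l * P 3 - m * P 2]

set_option maxHeartbeats 2000000

noncomputable def jmat (a b c d l m : ℝ) (P : Fin 5 → ℝ) : Matrix (Fin 5) (Fin 5) ℝ :=
  !![(((c * P 0 + d) ^ 2 + (c * P 1) ^ 2) * (a * (c * P 0 + d) + (a * P 0 + b) * c)
        - ((a * P 0 + b) * (c * P 0 + d) + a * c * P 1 ^ 2) * (2 * (c * P 0 + d) * c))
        / ((c * P 0 + d) ^ 2 + (c * P 1) ^ 2) ^ 2,
     (((c * P 0 + d) ^ 2 + (c * P 1) ^ 2) * (2 * a * c * P 1)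
        - ((a * P 0 + b) * (c * P 0 + d) + a * c * P 1 ^ 2) * (2 * c * c * P 1))
        / ((c * P 0 + d) ^ 2 + (c * P 1) ^ 2) ^ 2, 0, 0, 0;
     (-(P 1 * (2 * (c * P 0 + d) * c))) / ((c * P 0 + d) ^ 2 + (c * P 1) ^ 2) ^ 2,
     (((c * P 0 + d) ^ 2 + (c * P 1) ^ 2) - P 1 * (2 * c * c * P 1))
        / ((c * P 0 + d) ^ 2 + (c * P 1) ^ 2) ^ 2, 0, 0, 0;
     0, 0, d, -c, 0;
     0, 0, -b, a, 0;
     0, 0, -m, l, 1]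

noncomputable abbrev prj (i : Fin 5) : (Fin 5 → ℝ) →L[ℝ] ℝ := ContinuousLinearMap.proj i

lemma jac_eq (a b c d l m k₀ : ℝ) (P : Fin 5 → ℝ)
    (hΛ : (c * P 0 + d) ^ 2 + (c * P 1) ^ 2 ≠ 0) :
    jacobianMat (jPhiExt a b c d l m k₀) P = jmat a b c d l m P := by
  have h0 := (prj 0).hasFDerivAt (x := P)
  have h1 := (prj 1).hasFDerivAt (x := P)
  have h2 := (prj 2).hasFDerivAt (x := P)
  have h3 := (prj 3).hasFDerivAt (x := P)
  have h4 := (prj 4).hasFDerivAt (x := P)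
  have hN : HasFDerivAt (fun Q : Fin 5 → ℝ => (a * Q 0 + b) * (c * Q 0 + d) + a * c * (Q 1) ^ 2)
      ((a * P 0 + b) • (c • prj 0) + (c * P 0 + d) • (a • prj 0)
        + (a * c) • (P 1 • prj 1 + P 1 • prj 1)) P := by
    simp only [pow_two]
    exact (((h0.const_mul a).add_const b).mul ((h0.const_mul c).add_const d)).add
      ((h1.mul h1).const_mul (a * c))
  have hD : HasFDerivAt (fun Q : Fin 5 → ℝ => (c * Q 0 + d) ^ 2 + (c * Q 1) ^ 2)
      ((c * P 0 + d) • (c • prj 0) + (c * P 0 + d) • (c • prj 0)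
        + ((c * P 1) • (c • prj 1) + (c * P 1) • (c • prj 1))) P := by
    simp only [pow_two]
    exact (((h0.const_mul c).add_const d).mul ((h0.const_mul c).add_const d)).add
      ((h1.const_mul c).mul (h1.const_mul c))
  have hDinv : HasFDerivAt (fun Q : Fin 5 → ℝ => ((c * Q 0 + d) ^ 2 + (c * Q 1) ^ 2)⁻¹)
      ((-(((c * P 0 + d) ^ 2 + (c * P 1) ^ 2) ^ 2)⁻¹) •
        ((c * P 0 + d) • (c • prj 0) + (c * P 0 + d) • (c • prj 0)
          + ((c * P 1) • (c • prj 1) + (c * P 1) • (c • prj 1)))) P :=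
    (hasDerivAt_inv hΛ).comp_hasFDerivAt P hD
  have hF0 : HasFDerivAt (fun Q : Fin 5 → ℝ =>
      ((a * Q 0 + b) * (c * Q 0 + d) + a * c * (Q 1) ^ 2) /
        ((c * Q 0 + d) ^ 2 + (c * Q 1) ^ 2))
      (((a * P 0 + b) * (c * P 0 + d) + a * c * (P 1) ^ 2) •
          ((-(((c * P 0 + d) ^ 2 + (c * P 1) ^ 2) ^ 2)⁻¹) •
            ((c * P 0 + d) • (c • prj 0) + (c * P 0 + d) • (c • prj 0)
              + ((c * P 1) • (c • prj 1) + (c * P 1) • (c • prj 1))))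
        + (((c * P 0 + d) ^ 2 + (c * P 1) ^ 2)⁻¹) •
          ((a * P 0 + b) • (c • prj 0) + (c * P 0 + d) • (a • prj 0)
            + (a * c) • (P 1 • prj 1 + P 1 • prj 1))) P := by
    simp only [div_eq_mul_inv]
    exact hN.mul hDinv
  have hF1 : HasFDerivAt (fun Q : Fin 5 → ℝ =>
      Q 1 / ((c * Q 0 + d) ^ 2 + (c * Q 1) ^ 2))
      ((P 1) • ((-(((c * P 0 + d) ^ 2 + (c * P 1) ^ 2) ^ 2)⁻¹) •
            ((c * P 0 + d) • (c • prj 0) + (c * P 0 + d) • (c • prj 0)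
              + ((c * P 1) • (c • prj 1) + (c * P 1) • (c • prj 1))))
        + (((c * P 0 + d) ^ 2 + (c * P 1) ^ 2)⁻¹) • prj 1) P := by
    simp only [div_eq_mul_inv]
    exact h1.mul hDinv
  have hF2 : HasFDerivAt (fun Q : Fin 5 → ℝ => (l * d - m * c) + d * Q 2 - c * Q 3)
      ((d • prj 2) - c • prj 3) P := ((h2.const_mul d).const_add (l * d - m * c)).sub
        (h3.const_mul c)
  have hF3 : HasFDerivAt (fun Q : Fin 5 → ℝ => (-(l * b) + m * a) - b * Q 2 + a * Q 3)
      ((-(b • prj 2)) + a • prj 3) P := ((h2.const_mul b).const_sub (-(l * b) + m * a)).add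
        (h3.const_mul a)
  have hF4 : HasFDerivAt (fun Q : Fin 5 → ℝ => k₀ + Q 4 + l * Q 3 - m * Q 2)
      ((prj 4 + l • prj 3) - m • prj 2) P :=
    ((h4.const_add k₀).add (h3.const_mul l)).sub (h2.const_mul m)
  ext i j
  fin_cases i <;>
    simp only [jacobianMat, jPhiExt, jmat, Matrix.cons_val_zero, Matrix.cons_val_one,
      Matrix.head_cons, Matrix.cons_val_two, Matrix.tail_cons, Matrix.cons_val_three,
      Matrix.cons_val_four, Matrix.head_fin_const, Fin.isValue, Matrix.cons_val', Matrix.cons_val_fin_one,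
      Matrix.empty_val', Matrix.of_apply, Fin.zero_eta, Fin.mk_one, Fin.reduceFinMk]
  · rw [hF0.fderiv]
    fin_cases j <;>
      simp only [ContinuousLinearMap.add_apply, ContinuousLinearMap.smul_apply,
        ContinuousLinearMap.sub_apply, ContinuousLinearMap.neg_apply,
        ContinuousLinearMap.coe_smul', Pi.smul_apply, ContinuousLinearMap.proj_apply,
        smul_eq_mul, Pi.single_apply, Fin.isValue] <;>
      norm_num [Fin.ext_iff, show ((2:Fin 5):ℕ)=2 from rfl, show ((3:Fin 5):ℕ)=3 from rfl,
        show ((4:Fin 5):ℕ)=4 from rfl] <;> (try field_simp [hΛ]) <;> (try ring) <;> (try tauto)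
  · rw [hF1.fderiv]
    fin_cases j <;>
      simp only [ContinuousLinearMap.add_apply, ContinuousLinearMap.smul_apply,
        ContinuousLinearMap.sub_apply, ContinuousLinearMap.neg_apply,
        ContinuousLinearMap.coe_smul', Pi.smul_apply, ContinuousLinearMap.proj_apply,
        smul_eq_mul, Pi.single_apply, Fin.isValue] <;>
      norm_num [Fin.ext_iff, show ((2:Fin 5):ℕ)=2 from rfl, show ((3:Fin 5):ℕ)=3 from rfl,
        show ((4:Fin 5):ℕ)=4 from rfl] <;> (try field_simp [hΛ]) <;> (try ring) <;> (try tauto)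
  · rw [hF2.fderiv]
    fin_cases j <;>
      simp only [ContinuousLinearMap.add_apply, ContinuousLinearMap.smul_apply,
        ContinuousLinearMap.sub_apply, ContinuousLinearMap.neg_apply,
        ContinuousLinearMap.coe_smul', Pi.smul_apply, ContinuousLinearMap.proj_apply,
        smul_eq_mul, Pi.single_apply, Fin.isValue] <;>
      norm_num [Fin.ext_iff, show ((2:Fin 5):ℕ)=2 from rfl, show ((3:Fin 5):ℕ)=3 from rfl,
        show ((4:Fin 5):ℕ)=4 from rfl]
  · rw [hF3.fderiv]
    fin_cases j <;>
      simp only [ContinuousLinearMap.add_apply, ContinuousLinearMap.smul_apply,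
        ContinuousLinearMap.sub_apply, ContinuousLinearMap.neg_apply,
        ContinuousLinearMap.coe_smul', Pi.smul_apply, ContinuousLinearMap.proj_apply,
        smul_eq_mul, Pi.single_apply, Fin.isValue] <;>
      norm_num [Fin.ext_iff, show ((2:Fin 5):ℕ)=2 from rfl, show ((3:Fin 5):ℕ)=3 from rfl,
        show ((4:Fin 5):ℕ)=4 from rfl]
  · rw [hF4.fderiv]
    fin_cases j <;>
      simp only [ContinuousLinearMap.add_apply, ContinuousLinearMap.smul_apply,
        ContinuousLinearMap.sub_apply, ContinuousLinearMap.neg_apply,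
        ContinuousLinearMap.coe_smul', Pi.smul_apply, ContinuousLinearMap.proj_apply,
        smul_eq_mul, Pi.single_apply, Fin.isValue] <;>
      norm_num [Fin.ext_iff, show ((2:Fin 5):ℕ)=2 from rfl, show ((3:Fin 5):ℕ)=3 from rfl,
        show ((4:Fin 5):ℕ)=4 from rfl]

lemma key (α γ δ a b c d l m k₀ : ℝ) (h : a * d - b * c = 1) (P : Fin 5 → ℝ) (hy : 0 < P 1) :
    (jmat a b c d l m P)ᵀ * extG α γ δ (jPhiExt a b c d l m k₀ P) * jmat a b c d l m P
      = extG α γ δ P := by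
  have hy' : P 1 ≠ 0 := ne_of_gt hy
  have hΛ : (c * P 0 + d) ^ 2 + (c * P 1) ^ 2 ≠ 0 := by
    rcases eq_or_ne c 0 with hc | hc
    · have hd : d ≠ 0 := by intro hd; rw [hc, hd] at h; simp at h
      simp [hc]; positivity
    · positivity
  ext i j
  fin_cases i <;> fin_cases j <;>
    simp only [extG, jPhiExt, jmat, Matrix.mul_apply, Matrix.transpose_apply,
      Fin.sum_univ_five, Matrix.cons_val', Matrix.cons_val_zero, Matrix.cons_val_one,
      Matrix.head_cons, Matrix.cons_val_two, Matrix.tail_cons, Matrix.cons_val_three,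
      Matrix.cons_val_four, Matrix.head_fin_const, Matrix.empty_val',
      Matrix.cons_val_fin_one, Matrix.of_apply, Fin.zero_eta, Fin.mk_one,
      Fin.reduceFinMk, Fin.isValue]
  all_goals norm_num
  all_goals (try field_simp)
  · rw [mul_pow] at hΛ
    rcases eq_or_ne c 0 with hc | hc
    · subst hc
      have hd : d ≠ 0 := by rintro rfl; simp at h
      obtain rfl : a = 1 / d := by field_simp; linear_combination h
      field_simp
      ring
    · obtain rfl : b = (a * d - 1) / c := by field_simp; linear_combination -h
      field_simp
      ring
  · rw [mul_pow] at hΛ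
    rcases eq_or_ne c 0 with hc | hc
    · subst hc
      have hd : d ≠ 0 := by rintro rfl; simp at h
      obtain rfl : a = 1 / d := by field_simp; linear_combination h
      field_simp
      ring
    · obtain rfl : b = (a * d - 1) / c := by field_simp; linear_combination -h
      field_simp
      ring
  · rw [mul_pow] at hΛ
    rcases eq_or_ne c 0 with hc | hc
    · subst hc
      have hd : d ≠ 0 := by rintro rfl; simp at h
      obtain rfl : a = 1 / d := by field_simp; linear_combination h
      field_simp
      ring
    · obtain rfl : b = (a * d - 1) / c := by field_simp; linear_combination -h
      field_simp
      ring
  · rw [mul_pow] at hΛ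
    rcases eq_or_ne c 0 with hc | hc
    · subst hc
      have hd : d ≠ 0 := by rintro rfl; simp at h
      obtain rfl : a = 1 / d := by field_simp; linear_combination h
      field_simp
      ring
    · obtain rfl : b = (a * d - 1) / c := by field_simp; linear_combination -h
      field_simp
      ring
  · rw [mul_pow] at hΛ
    rcases eq_or_ne c 0 with hc | hc
    · subst hc
      have hd : d ≠ 0 := by rintro rfl; simp at h
      obtain rfl : a = 1 / d := by field_simp; linear_combination h
      field_simp
      ring
    · obtain rfl : b = (a * d - 1) / c := by field_simp; linear_combination -h
      field_simp
      ring
  · rw [mul_pow] at hΛ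
    rcases eq_or_ne c 0 with hc | hc
    · subst hc
      have hd : d ≠ 0 := by rintro rfl; simp at h
      obtain rfl : a = 1 / d := by field_simp; linear_combination h
      field_simp
      ring
    · obtain rfl : b = (a * d - 1) / c := by field_simp; linear_combination -h
      field_simp
      ring
  · linear_combination (m * δ + (P 3) * δ) * h
  · rw [mul_pow] at hΛ
    rcases eq_or_ne c 0 with hc | hc
    · subst hc
      have hd : d ≠ 0 := by rintro rfl; simp at h
      obtain rfl : a = 1 / d := by field_simp; linear_combination h
      field_simp
      ring
    · obtain rfl : b = (a * d - 1) / c := by field_simp; linear_combination -h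
      field_simp
      ring
  · rw [mul_pow] at hΛ
    rcases eq_or_ne c 0 with hc | hc
    · subst hc
      have hd : d ≠ 0 := by rintro rfl; simp at h
      obtain rfl : a = 1 / d := by field_simp; linear_combination h
      field_simp
      ring
    · obtain rfl : b = (a * d - 1) / c := by field_simp; linear_combination -h
      field_simp
      ring
  · linear_combination (-1 * l * δ + -1 * (P 2) * δ) * h
  · linear_combination (m * δ + (P 3) * δ) * h
  · linear_combination (-1 * l * δ + -1 * (P 2) * δ) * h

/-- The metric `ds² = α(dx²+dy²)/y² + (γ/y)[(x²+y²)dp² + dq² + 2x dp dq]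
+ δ(dκ − p dq + q dp)²` on the extended Siegel–Jacobi upper half-plane `X̃₁^J` is
invariant under the action of the real Jacobi group `G^J₁(ℝ)`. -/
theorem extended_metric_invariant (α γ δ a b c d l m k₀ : ℝ)
    (hα : 0 < α) (hγ : 0 < γ) (hδ : 0 < δ) (h : a * d - b * c = 1) :
    ∀ P : Fin 5 → ℝ, 0 < P 1 →
      0 < jPhiExt a b c d l m k₀ P 1 ∧
      (jacobianMat (jPhiExt a b c d l m k₀) P)ᵀ *
          extG α γ δ (jPhiExt a b c d l m k₀ P) *
          jacobianMat (jPhiExt a b c d l m k₀) P = extG α γ δ P := by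
  intro P hP
  have hy' : P 1 ≠ 0 := ne_of_gt hP
  have hΛ : 0 < (c * P 0 + d) ^ 2 + (c * P 1) ^ 2 := by
    rcases eq_or_ne c 0 with hc | hc
    · have hd : d ≠ 0 := by intro hd; rw [hc, hd] at h; simp at h
      simp [hc]; positivity
    · have hcy : c * P 1 ≠ 0 := mul_ne_zero hc hy'
      positivity
  constructor
  · show 0 < jPhiExt a b c d l m k₀ P 1
    simp only [jPhiExt, Matrix.cons_val_one, Matrix.head_cons]
    exact div_pos hP hΛ
  · rw [jac_eq a b c d l m k₀ P hΛ.ne']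
    exact key α γ δ a b c d l m k₀ h P hP
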